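/- Let d = diag(u₁², …, u_I²) with u_α > 0, let v ∈ ℝ^I, g ≥ 0, and b = g·|v⟩⟨v|. Define E = ( (d)^{1/2}(d+2b)(d)^{1/2} )^{1/2} (i.e., E = [d^{1/2}(d+2b)d^{1/2}]^{1/2}). Then tr E − tr d = (1/π) ∫_{0}^{∞} log( 1 + 2g·Σ_{α=1}^{I} u_α² v_α² / (u_α⁴ + λ²) ) dλ. -/

import Mathlib

open Matrix Real

/-- The square root of a positive semidefinite matrix, as defined in the older Mathlib
(`Matrix.PosSemidef.sqrt`, since removed). -/
noncomputable def Matrix.PosSemidef.sqrt {n 𝕜 : Type*} [Fintype n] [RCLike 𝕜] [PartialOrder 𝕜] [DecidableEq n]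
    {A : Matrix n n 𝕜} (hA : A.PosSemidef) : Matrix n n 𝕜 :=
  hA.1.eigenvectorUnitary.1 * diagonal ((↑) ∘ (√·) ∘ hA.1.eigenvalues) *
    (star hA.1.eigenvectorUnitary : Matrix n n 𝕜)

open Matrix Real MeasureTheory Set Filter Topology

/- ### Analysis lemmas -/

lemma log_sub_log_le {x y : ℝ} (hy : 0 < y) (hxy : y ≤ x) :
    Real.log x - Real.log y ≤ (x - y) / y := by
  have hx : 0 < x := hy.trans_le hxy
  rw [← Real.log_div hx.ne' hy.ne']
  calc Real.log (x / y) ≤ x / y - 1 := Real.log_le_sub_one_of_pos (div_pos hx hy)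
    _ = (x - y) / y := by field_simp

lemma abs_log_sub_log_le {x y : ℝ} (hx : 0 < x) (hy : 0 < y) :
    |Real.log x - Real.log y| ≤ |x - y| / min x y := by
  rcases le_total y x with h | h
  · rw [min_eq_right h, abs_of_nonneg (sub_nonneg.2 (Real.log_le_log hy h)),
      abs_of_nonneg (sub_nonneg.2 h)]
    exact log_sub_log_le hy h
  · rw [min_eq_left h, abs_sub_comm, abs_sub_comm x y,
      abs_of_nonneg (sub_nonneg.2 (Real.log_le_log hx h)),
      abs_of_nonneg (sub_nonneg.2 h)]
    exact log_sub_log_le hx h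

lemma cont_inv_add_sq {c : ℝ} (hc : 0 < c) :
    Continuous (fun x : ℝ => (c + x ^ 2)⁻¹) :=
  (continuous_const.add (continuous_pow 2)).inv₀ (fun x => (by positivity : c + x ^ 2 ≠ 0))

lemma integrableOn_inv_const_add_sq {c : ℝ} (hc : 0 < c) :
    IntegrableOn (fun x : ℝ => (c + x ^ 2)⁻¹) (Ioi 0) := by
  have h1 : IntegrableOn (fun x : ℝ => (min c 1)⁻¹ * (1 + x ^ 2)⁻¹) (Ioi 0) :=
    (integrable_inv_one_add_sq.const_mul _).integrableOn
  refine h1.mono' ((cont_inv_add_sq hc).aestronglyMeasurable.restrict) ?_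
  refine Eventually.of_forall fun x => ?_
  have hm : 0 < min c 1 := lt_min hc one_pos
  have h2 : min c 1 * (1 + x ^ 2) ≤ c + x ^ 2 := by
    have h3 : min c 1 ≤ c := min_le_left _ _
    have h4 : min c 1 ≤ 1 := min_le_right _ _
    nlinarith [sq_nonneg x]
  rw [Real.norm_eq_abs, abs_of_nonneg (by positivity), ← mul_inv]
  exact inv_anti₀ (by positivity) h2

lemma integrableOn_log_ratio {a b : ℝ} (ha : 0 < a) (hb : 0 < b) :
    IntegrableOn (fun x : ℝ => Real.log (a + x ^ 2) - Real.log (b + x ^ 2)) (Ioi 0) := by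
  have hcont : Continuous (fun x : ℝ => Real.log (a + x ^ 2) - Real.log (b + x ^ 2)) := by
    apply Continuous.sub
    · exact (continuous_const.add (continuous_pow 2)).log (fun x => (by positivity : a + x ^ 2 ≠ 0))
    · exact (continuous_const.add (continuous_pow 2)).log (fun x => (by positivity : b + x ^ 2 ≠ 0))
  have hmaj : IntegrableOn (fun x : ℝ => |a - b| * (min a b + x ^ 2)⁻¹) (Ioi 0) :=
    (integrableOn_inv_const_add_sq (lt_min ha hb)).const_mul _
  refine hmaj.mono' hcont.aestronglyMeasurable.restrict ?_
  refine Eventually.of_forall fun x => ?_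
  have h1 : 0 < a + x ^ 2 := by positivity
  have h2 : 0 < b + x ^ 2 := by positivity
  rw [Real.norm_eq_abs]
  calc |Real.log (a + x ^ 2) - Real.log (b + x ^ 2)|
      ≤ |(a + x ^ 2) - (b + x ^ 2)| / min (a + x ^ 2) (b + x ^ 2) := abs_log_sub_log_le h1 h2
    _ = |a - b| * (min a b + x ^ 2)⁻¹ := by
        rw [div_eq_mul_inv]
        congr 1
        · ring_nf
        · rw [← min_add_add_right]

lemma hasDerivAt_G {c : ℝ} (hc : 0 < c) (x : ℝ) :
    HasDerivAt (fun x : ℝ => x * Real.log (c + x ^ 2) - 2 * x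
        + 2 * Real.sqrt c * Real.arctan (x / Real.sqrt c))
      (Real.log (c + x ^ 2)) x := by
  have hsc : 0 < Real.sqrt c := Real.sqrt_pos.2 hc
  have hcx : 0 < c + x ^ 2 := by positivity
  have h1 : HasDerivAt (fun x : ℝ => c + x ^ 2) (2 * x) x := by
    simpa using (hasDerivAt_pow 2 x).const_add c
  have h2 : HasDerivAt (fun x : ℝ => Real.log (c + x ^ 2)) (2 * x / (c + x ^ 2)) x :=
    h1.log hcx.ne'
  have h3 : HasDerivAt (fun x : ℝ => x * Real.log (c + x ^ 2))
      (1 * Real.log (c + x ^ 2) + x * (2 * x / (c + x ^ 2))) x :=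
    (hasDerivAt_id x).mul h2
  have h4 : HasDerivAt (fun x : ℝ => x / Real.sqrt c) (1 / Real.sqrt c) x := by
    simpa using (hasDerivAt_id x).div_const (Real.sqrt c)
  have h5 : HasDerivAt (fun x : ℝ => Real.arctan (x / Real.sqrt c))
      ((1 / (1 + (x / Real.sqrt c) ^ 2)) * (1 / Real.sqrt c)) x :=
    (Real.hasDerivAt_arctan _).comp x h4
  have h6 := ((h3.sub ((hasDerivAt_id x).const_mul 2)).add (h5.const_mul (2 * Real.sqrt c)))
  refine h6.congr_deriv ?_
  have hss : Real.sqrt c * Real.sqrt c = c := Real.mul_self_sqrt hc.le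
  field_simp
  ring_nf
  rw [Real.sq_sqrt hc.le]
  ring

lemma tendsto_x_mul_log_ratio {a b : ℝ} (ha : 0 < a) (hb : 0 < b) :
    Tendsto (fun x : ℝ => x * (Real.log (a + x ^ 2) - Real.log (b + x ^ 2))) atTop (𝓝 0) := by
  refine squeeze_zero_norm' ?_
    (tendsto_const_nhds.div_atTop tendsto_id :
      Tendsto (fun x : ℝ => |a - b| / x) atTop (𝓝 0))
  filter_upwards [eventually_gt_atTop (0 : ℝ)] with x hx
  have h1 : 0 < a + x ^ 2 := by positivity
  have h2 : 0 < b + x ^ 2 := by positivity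
  rw [Real.norm_eq_abs, abs_mul, abs_of_pos hx]
  have hab : a + x ^ 2 - (b + x ^ 2) = a - b := by ring
  calc x * |Real.log (a + x ^ 2) - Real.log (b + x ^ 2)|
      ≤ x * (|a - b| / min (a + x ^ 2) (b + x ^ 2)) := by
        rw [← hab]
        exact mul_le_mul_of_nonneg_left (abs_log_sub_log_le h1 h2) hx.le
    _ ≤ x * (|a - b| / x ^ 2) := by
        apply mul_le_mul_of_nonneg_left _ hx.le
        apply div_le_div_of_nonneg_left (abs_nonneg _) (by positivity)
        exact le_min (by nlinarith) (by nlinarith)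
    _ = |a - b| / x := by field_simp

lemma integral_log_ratio {a b : ℝ} (ha : 0 < a) (hb : 0 < b) :
    ∫ x in Ioi (0:ℝ), (Real.log (a + x ^ 2) - Real.log (b + x ^ 2))
      = π * (Real.sqrt a - Real.sqrt b) := by
  set F : ℝ → ℝ := fun x =>
    (x * Real.log (a + x ^ 2) - 2 * x + 2 * Real.sqrt a * Real.arctan (x / Real.sqrt a))
    - (x * Real.log (b + x ^ 2) - 2 * x + 2 * Real.sqrt b * Real.arctan (x / Real.sqrt b))
    with hF
  have hderiv : ∀ x : ℝ, HasDerivAt F (Real.log (a + x ^ 2) - Real.log (b + x ^ 2)) x :=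
    fun x => (hasDerivAt_G ha x).sub (hasDerivAt_G hb x)
  have hF0 : F 0 = 0 := by simp [hF]
  have htend : Tendsto F atTop (𝓝 (π * (Real.sqrt a - Real.sqrt b))) := by
    have harct : ∀ c : ℝ, 0 < c → Tendsto (fun x : ℝ => Real.arctan (x / Real.sqrt c))
        atTop (𝓝 (π / 2)) := by
      intro c hc
      have h := (Real.tendsto_arctan_atTop.mono_right nhdsWithin_le_nhds)
      exact h.comp (tendsto_id.atTop_div_const (Real.sqrt_pos.2 hc))
    have h1 : Tendsto (fun x : ℝ => x * (Real.log (a + x ^ 2) - Real.log (b + x ^ 2))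
        + (2 * Real.sqrt a * Real.arctan (x / Real.sqrt a)
          - 2 * Real.sqrt b * Real.arctan (x / Real.sqrt b))) atTop
        (𝓝 (0 + (2 * Real.sqrt a * (π / 2) - 2 * Real.sqrt b * (π / 2)))) := by
      exact (tendsto_x_mul_log_ratio ha hb).add
        (((harct a ha).const_mul _).sub ((harct b hb).const_mul _))
    have h2 : (0:ℝ) + (2 * Real.sqrt a * (π / 2) - 2 * Real.sqrt b * (π / 2))
        = π * (Real.sqrt a - Real.sqrt b) := by ring
    rw [h2] at h1
    refine h1.congr (fun x => ?_)
    simp only [hF]; ring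
  have := integral_Ioi_of_hasDerivAt_of_tendsto
    (f := F) (f' := fun x => Real.log (a + x ^ 2) - Real.log (b + x ^ 2)) (a := 0)
    (hderiv 0).continuousAt.continuousWithinAt
    (fun x _ => hderiv x) (integrableOn_log_ratio ha hb) htend
  rw [this, hF0, sub_zero]

/- ### Linear algebra lemmas -/

lemma trace_posSemidef_sqrt {n : Type*} [Fintype n] [DecidableEq n]
    {A : Matrix n n ℝ} (hA : A.PosSemidef) :
    hA.sqrt.trace = ∑ i, Real.sqrt (hA.1.eigenvalues i) := by
  rw [Matrix.PosSemidef.sqrt, Matrix.trace_mul_cycle]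
  rw [(Matrix.mem_unitaryGroup_iff'.mp hA.1.eigenvectorUnitary.2)]
  rw [Matrix.one_mul, Matrix.trace_diagonal]
  simp

lemma det_hermitian_add_smul_one {n : Type*} [Fintype n] [DecidableEq n]
    {A : Matrix n n ℝ} (hH : A.IsHermitian) (t : ℝ) :
    (A + t • 1).det = ∏ i, (hH.eigenvalues i + t) := by
  have hU := Matrix.mem_unitaryGroup_iff.mp hH.eigenvectorUnitary.2
  have key : A + t • 1
      = hH.eigenvectorUnitary.1 * (Matrix.diagonal (RCLike.ofReal ∘ hH.eigenvalues) + t • 1)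
        * (star hH.eigenvectorUnitary.1 : Matrix n n ℝ) := by
    rw [Matrix.mul_add, Matrix.add_mul]
    conv_lhs => rw [hH.spectral_theorem, Unitary.conjStarAlgAut_apply]
    congr 1
    rw [Matrix.mul_smul, Matrix.smul_mul, Matrix.mul_one, hU]
  rw [key, Matrix.det_mul_right_comm, hU, Matrix.one_mul]
  have : (Matrix.diagonal (RCLike.ofReal ∘ hH.eigenvalues) + t • (1 : Matrix n n ℝ))
      = diagonal (fun i => hH.eigenvalues i + t) := by
    rw [Matrix.smul_one_eq_diagonal, Matrix.diagonal_add]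
    rfl
  rw [this, Matrix.det_diagonal]

lemma posSemidef_vecMulVec_self {n : Type*} [Fintype n] (x : n → ℝ) :
    (vecMulVec x x).PosSemidef := by
  have h := Matrix.posSemidef_conjTranspose_mul_self (Matrix.replicateRow Unit x)
  rw [Matrix.conjTranspose_replicateRow] at h
  rw [Matrix.vecMulVec_eq Unit]
  simpa using h

lemma posSemidef_smul_vecMulVec {n : Type*} [Fintype n] (x : n → ℝ) (c : ℝ) (hc : 0 ≤ c) :
    (c • vecMulVec x x).PosSemidef := by
  have h := posSemidef_vecMulVec_self (fun i => Real.sqrt c * x i)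
  have key : vecMulVec (fun i => Real.sqrt c * x i) (fun i => Real.sqrt c * x i)
      = c • vecMulVec x x := by
    ext i j
    simp only [Matrix.vecMulVec_apply, Matrix.smul_apply, smul_eq_mul]
    set s := Real.sqrt c with hs
    have h2 : s * s = c := Real.mul_self_sqrt hc
    rw [← h2]; ring
  rwa [key] at h

lemma det_diagonal_add_smul_vecMulVec {n : Type*} [Fintype n] [DecidableEq n]
    (c w : n → ℝ) (x : ℝ) (hc : ∀ i, 0 < c i) :
    (diagonal c + x • vecMulVec w w).det
      = (∏ i, c i) * (1 + x * ∑ i, w i ^ 2 / c i) := by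
  have key : diagonal c + x • vecMulVec w w
      = diagonal c * (1 + Matrix.replicateCol Unit (fun i => x * w i / c i) * Matrix.replicateRow Unit w) := by
    rw [Matrix.mul_add, Matrix.mul_one]
    congr 1
    ext i j
    simp only [Matrix.smul_apply, Matrix.vecMulVec_apply, smul_eq_mul, Matrix.diagonal_mul,
      Matrix.mul_apply, Finset.univ_unique, Finset.sum_singleton, Matrix.replicateCol_apply,
      Matrix.replicateRow_apply, Matrix.diagonal_apply, ite_mul, zero_mul, mul_ite, mul_zero,
      Finset.sum_ite_eq, Finset.mem_univ, if_true]
    have := (hc i).ne'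
    field_simp
  rw [key, Matrix.det_mul, Matrix.det_diagonal, Matrix.det_one_add_replicateCol_mul_replicateRow]
  congr 1
  rw [dotProduct, Finset.mul_sum]
  congr 1
  apply Finset.sum_congr rfl
  intro i _
  have := (hc i).ne'
  field_simp

/- ### Main theorem -/

/-- Let `d = diag(u₁²,…,u_I²)` with `u_α > 0`, `v ∈ ℝ^I`, `g ≥ 0`, `b = g·|v⟩⟨v|`, and
`E = [d^{1/2}(d+2b)d^{1/2}]^{1/2}`. Then
`tr E − tr d = (1/π)∫₀^∞ log(1 + 2g·Σ_α u_α²v_α²/(u_α⁴+λ²)) dλ`. -/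
theorem trace_E_sub_trace_d {I : ℕ} (u v : Fin I → ℝ) (hu : ∀ α, 0 < u α)
    (g : ℝ) (hg : 0 ≤ g)
    (d b : Matrix (Fin I) (Fin I) ℝ)
    (hd : d = Matrix.diagonal (fun α => u α ^ 2))
    (hb : b = g • vecMulVec v v)
    (hdp : d.PosSemidef)
    (h1 : (hdp.sqrt * (d + 2 • b) * hdp.sqrt).PosSemidef) :
    (h1.sqrt).trace - d.trace
      = (1 / π) * ∫ lam in Set.Ioi (0:ℝ),
          Real.log (1 + 2 * g * ∑ α, u α ^ 2 * v α ^ 2 / (u α ^ 4 + lam ^ 2)) := by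
  classical
  have hc : ∀ i, (0:ℝ) < u i ^ 4 := fun i => pow_pos (hu i) 4
  -- the square root of d
  have hdiagu : (Matrix.diagonal u).PosSemidef :=
    Matrix.posSemidef_diagonal_iff.mpr (fun i => (hu i).le)
  have hsq : Matrix.diagonal u ^ 2 = d := by
    rw [hd, pow_two, Matrix.diagonal_mul_diagonal]
    congr 1; funext i; ring
  have hsqrt : Matrix.diagonal u = hdp.sqrt := by
    have hD : IsSelfAdjoint (Matrix.diagonal u) := hdiagu.1
    have e1 : hdp.sqrt = cfc Real.sqrt d := by
      rw [hdp.1.cfc_eq]; rfl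
    have e2 : cfc (fun x : ℝ => x ^ 2) (Matrix.diagonal u) = d :=
      (cfc_pow (fun x : ℝ => x) 2 (Matrix.diagonal u)).trans (by rw [cfc_id' ℝ (Matrix.diagonal u), hsq])
    rw [e1, ← e2, ← cfc_comp Real.sqrt (fun x : ℝ => x ^ 2) (Matrix.diagonal u)]
    conv_lhs => rw [← cfc_id' ℝ (Matrix.diagonal u)]
    apply cfc_congr
    intro x hx
    rw [spectrum_diagonal] at hx
    obtain ⟨i, rfl⟩ := hx
    simp [Real.sqrt_sq (hu i).le]
  -- the matrix M explicitly
  have hM : hdp.sqrt * (d + 2 • b) * hdp.sqrt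
      = Matrix.diagonal (fun i => u i ^ 4)
        + (2 * g) • vecMulVec (fun i => u i * v i) (fun i => u i * v i) := by
    rw [← hsqrt, hd, hb, two_smul]
    ext i j
    simp only [Matrix.mul_diagonal, Matrix.diagonal_mul, Matrix.add_apply, Matrix.smul_apply,
      Matrix.vecMulVec_apply, Matrix.diagonal_apply, smul_eq_mul]
    split_ifs with h
    · subst h; ring
    · ring
  -- positive definiteness and eigenvalues
  have hMpd : (hdp.sqrt * (d + 2 • b) * hdp.sqrt).PosDef := by
    rw [hM]
    exact (Matrix.posDef_diagonal_iff.mpr hc).add_posSemidef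
      (posSemidef_smul_vecMulVec _ (2 * g) (by linarith))
  have hmu : ∀ i, 0 < h1.1.eigenvalues i := fun i => hMpd.eigenvalues_pos i
  -- the determinant identity
  have hdet : ∀ t : ℝ, 0 ≤ t →
      ∏ i, (h1.1.eigenvalues i + t)
        = (∏ i, (u i ^ 4 + t)) * (1 + 2 * g * ∑ i, u i ^ 2 * v i ^ 2 / (u i ^ 4 + t)) := by
    intro t ht
    have h := det_hermitian_add_smul_one h1.1 t
    rw [← h]
    have e1 : hdp.sqrt * (d + 2 • b) * hdp.sqrt + t • 1
        = Matrix.diagonal (fun i => u i ^ 4 + t)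
          + (2 * g) • vecMulVec (fun i => u i * v i) (fun i => u i * v i) := by
      rw [hM, Matrix.smul_one_eq_diagonal, add_right_comm, Matrix.diagonal_add]
    have hct : ∀ i, (0:ℝ) < u i ^ 4 + t :=
      fun i => add_pos_of_pos_of_nonneg (hc i) ht
    have hsum : (∑ i, (u i * v i) ^ 2 / (u i ^ 4 + t))
        = ∑ i, u i ^ 2 * v i ^ 2 / (u i ^ 4 + t) :=
      Finset.sum_congr rfl (fun i _ => by rw [mul_pow])
    rw [e1, det_diagonal_add_smul_vecMulVec _ _ _ hct, hsum]
  -- pointwise logarithmic identity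
  have hpt : ∀ lam : ℝ,
      Real.log (1 + 2 * g * ∑ α, u α ^ 2 * v α ^ 2 / (u α ^ 4 + lam ^ 2))
        = ∑ i, (Real.log (h1.1.eigenvalues i + lam ^ 2) - Real.log (u i ^ 4 + lam ^ 2)) := by
    intro lam
    have ht : (0:ℝ) ≤ lam ^ 2 := sq_nonneg _
    have hμt : ∀ i, (0:ℝ) < h1.1.eigenvalues i + lam ^ 2 := fun i => by
      have := hmu i; positivity
    have hct : ∀ i, (0:ℝ) < u i ^ 4 + lam ^ 2 := fun i => by
      have := hc i; positivity
    have hS : (0:ℝ) ≤ 2 * g * ∑ α, u α ^ 2 * v α ^ 2 / (u α ^ 4 + lam ^ 2) := by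
      apply mul_nonneg (by linarith)
      apply Finset.sum_nonneg
      intro i _
      have := hct i
      positivity
    have hprodc : (0:ℝ) < ∏ i, (u i ^ 4 + lam ^ 2) := Finset.prod_pos (fun i _ => hct i)
    rw [Finset.sum_sub_distrib,
      ← Real.log_prod (fun i _ => (hμt i).ne'),
      ← Real.log_prod (fun i _ => (hct i).ne'),
      hdet (lam ^ 2) ht,
      Real.log_mul hprodc.ne' (by linarith : (1:ℝ) + 2 * g * ∑ α, u α ^ 2 * v α ^ 2 / (u α ^ 4 + lam ^ 2) ≠ 0)]
    ring
  -- integrability and evaluation of each summand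
  have hint : ∀ i : Fin I,
      IntegrableOn (fun lam : ℝ =>
        Real.log (h1.1.eigenvalues i + lam ^ 2) - Real.log (u i ^ 4 + lam ^ 2)) (Ioi 0) :=
    fun i => integrableOn_log_ratio (hmu i) (hc i)
  have hval : ∀ i : Fin I,
      (∫ lam in Ioi (0:ℝ),
        (Real.log (h1.1.eigenvalues i + lam ^ 2) - Real.log (u i ^ 4 + lam ^ 2)))
      = π * (Real.sqrt (h1.1.eigenvalues i) - u i ^ 2) := by
    intro i
    rw [integral_log_ratio (hmu i) (hc i)]
    congr 2
    rw [show u i ^ 4 = (u i ^ 2) ^ 2 by ring, Real.sqrt_sq (sq_nonneg _)]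
  -- put everything together
  have hI : (∫ lam in Set.Ioi (0:ℝ),
      Real.log (1 + 2 * g * ∑ α, u α ^ 2 * v α ^ 2 / (u α ^ 4 + lam ^ 2)))
      = ∑ i, (π * (Real.sqrt (h1.1.eigenvalues i) - u i ^ 2)) := by
    rw [MeasureTheory.setIntegral_congr_fun measurableSet_Ioi (fun lam _ => hpt lam)]
    rw [MeasureTheory.integral_finset_sum _ (fun i _ => hint i)]
    exact Finset.sum_congr rfl (fun i _ => hval i)
  have htr : d.trace = ∑ i, u i ^ 2 := by rw [hd, Matrix.trace_diagonal]
  rw [hI, trace_posSemidef_sqrt h1, htr]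
  rw [← Finset.mul_sum, ← mul_assoc, one_div, inv_mul_cancel₀ Real.pi_ne_zero, one_mul,
    Finset.sum_sub_distrib]
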